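/- Let X = ℓ², and let C = {x ∈ ℓ² : x_{2n-1} + x_{2n} = 0 for all n ≥ 1} and S = {x ∈ ℓ² : x_{2n} + x_{2n+1} = 0 for all n ≥ 1}. Then C ∩ S = {0}, and the orthogonal complement of S is S^⊥ = {x ∈ ℓ² : x₁ = 0 and x_{2n} = x_{2n+1} for all n ≥ 1}. -/

import Mathlib

open RealInnerProductSpace

private def swapIdx : ℕ → ℕ
  | 0 => 0
  | n + 1 => if n % 2 = 0 then n + 2 else n

private lemma swapIdx_odd (n : ℕ) : swapIdx (2 * n + 1) = 2 * n + 2 := by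
  simp [swapIdx, Nat.mul_mod_right]

private lemma swapIdx_even (n : ℕ) : swapIdx (2 * n + 2) = 2 * n + 1 := by
  show swapIdx ((2 * n + 1) + 1) = 2 * n + 1
  simp [swapIdx, Nat.add_mod, Nat.mul_mod_right]

private lemma tri (i : ℕ) : i = 0 ∨ (∃ n, i = 2 * n + 1) ∨ (∃ n, i = 2 * n + 2) := by
  rcases Nat.even_or_odd i with ⟨n, hn⟩ | ⟨n, hn⟩
  · cases n with
    | zero => left; omega
    | succ m => right; right; exact ⟨m, by omega⟩
  · right; left; exact ⟨n, by omega⟩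

private lemma swapIdx_invol (i : ℕ) : swapIdx (swapIdx i) = i := by
  rcases tri i with rfl | ⟨n, rfl⟩ | ⟨n, rfl⟩
  · rfl
  · rw [swapIdx_odd, swapIdx_even]
  · rw [swapIdx_even, swapIdx_odd]

private def swapEquiv : ℕ ≃ ℕ :=
  ⟨swapIdx, swapIdx, swapIdx_invol, swapIdx_invol⟩

/-- In ℓ² (coordinates x₁, x₂, … realized with x_{n+1} = x n for
n : ℕ), let C = {x : x_{2n-1} + x_{2n} = 0 ∀ n ≥ 1} and
S = {x : x_{2n} + x_{2n+1} = 0 ∀ n ≥ 1}. Then C ∩ S = {0} and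
S^⊥ = {x : x₁ = 0 and x_{2n} = x_{2n+1} ∀ n ≥ 1}. -/
theorem stmt_18
    (C S : Set (lp (fun _ : ℕ => ℝ) 2))
    (hC : C = {x | ∀ n : ℕ, x (2 * n) + x (2 * n + 1) = 0})
    (hS : S = {x | ∀ n : ℕ, x (2 * n + 1) + x (2 * n + 2) = 0}) :
    C ∩ S = {0} ∧
    {x : lp (fun _ : ℕ => ℝ) 2 | ∀ y ∈ S, ⟪x, y⟫ = 0} =
      {x | x 0 = 0 ∧ ∀ n : ℕ, x (2 * n + 1) = x (2 * n + 2)} := by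
  subst hC hS
  constructor
  · -- C ∩ S = {0}
    ext x
    simp only [Set.mem_inter_iff, Set.mem_setOf_eq, Set.mem_singleton_iff]
    constructor
    · rintro ⟨hc, hs⟩
      have key : ∀ n : ℕ, x (2 * n) = x 0 ∧ x (2 * n + 1) = -(x 0) := by
        intro n
        induction n with
        | zero => exact ⟨rfl, by have := hc 0; linarith⟩
        | succ m ih =>
          have h1 : x (2 * (m + 1)) = x 0 := by
            have := hs m
            have h2 : (2 * (m + 1) : ℕ) = 2 * m + 2 := by ring
            rw [h2]; linarith [ih.2]
          refine ⟨h1, ?_⟩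
          have := hc (m + 1)
          linarith
      have hall : ∀ i : ℕ, ‖x i‖ = ‖x 0‖ := by
        intro i
        rcases tri i with rfl | ⟨n, rfl⟩ | ⟨n, rfl⟩
        · rfl
        · rw [(key n).2]; simp
        · have : (2 * n + 2 : ℕ) = 2 * (n + 1) := by ring
          rw [this, (key (n + 1)).1]
      have hmem : Memℓp (⇑x) 2 := lp.memℓp x
      have hsum : Summable fun i => ‖x i‖ ^ (2 : ℝ).toNNReal.toReal := by
        have := hmem.summable (p := 2) (by norm_num)
        simpa using this
      have hlim := hsum.tendsto_atTop_zero
      have hconst : (fun i => ‖x i‖ ^ (2 : ℝ).toNNReal.toReal) =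
          fun _ => ‖x 0‖ ^ (2 : ℝ).toNNReal.toReal := by
        funext i; rw [hall i]
      rw [hconst] at hlim
      have h0 : ‖x 0‖ ^ (2 : ℝ).toNNReal.toReal = 0 :=
        tendsto_nhds_unique tendsto_const_nhds hlim
      have hx0 : x 0 = 0 := by
        by_contra h
        have : ‖x 0‖ > 0 := norm_pos_iff.mpr h
        have : ‖x 0‖ ^ (2 : ℝ).toNNReal.toReal > 0 := Real.rpow_pos_of_pos this _
        linarith
      apply lp.ext
      funext i
      have hz : ∀ j, (0 : lp (fun _ : ℕ => ℝ) 2) j = 0 := fun j => rfl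
      rcases tri i with rfl | ⟨n, rfl⟩ | ⟨n, rfl⟩
      · rw [hx0, hz]
      · rw [(key n).2, hx0, hz]; simp
      · have h2 : (2 * n + 2 : ℕ) = 2 * (n + 1) := by ring
        rw [h2, (key (n + 1)).1, hx0, hz]
    · rintro rfl
      constructor <;> intro n <;> simp
  · -- orthogonal complement
    ext x
    simp only [Set.mem_setOf_eq]
    constructor
    · intro h
      constructor
      · -- x 0 = 0
        have hy : (lp.single 2 0 (1 : ℝ) : lp (fun _ : ℕ => ℝ) 2) ∈
            {y : lp (fun _ : ℕ => ℝ) 2 | ∀ n : ℕ, y (2 * n + 1) + y (2 * n + 2) = 0} := by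
          intro n
          rw [lp.single_apply_ne 2 0 _ (by omega), lp.single_apply_ne 2 0 _ (by omega)]
          ring
        have := h _ hy
        rw [lp.inner_single_right] at this
        simpa [RCLike.inner_apply] using this
      · intro n
        set y : lp (fun _ : ℕ => ℝ) 2 :=
          lp.single 2 (2 * n + 1) (1 : ℝ) - lp.single 2 (2 * n + 2) (1 : ℝ) with hy_def
        have hy : y ∈
            {y : lp (fun _ : ℕ => ℝ) 2 | ∀ m : ℕ, y (2 * m + 1) + y (2 * m + 2) = 0} := by
          intro m
          have hc : ∀ j, y j = (lp.single 2 (2 * n + 1) (1 : ℝ) : lp (fun _ : ℕ => ℝ) 2) j -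
              (lp.single 2 (2 * n + 2) (1 : ℝ) : lp (fun _ : ℕ => ℝ) 2) j := by
            intro j; rw [hy_def, lp.coeFn_sub]; rfl
          rw [hc, hc]
          by_cases hmn : m = n
          · subst hmn
            rw [lp.single_apply_self, lp.single_apply_self,
              lp.single_apply_ne 2 _ _ (by omega : (2*m+1 : ℕ) ≠ 2*m+2),
              lp.single_apply_ne 2 _ _ (by omega : (2*m+2 : ℕ) ≠ 2*m+1)]
            ring
          · rw [lp.single_apply_ne 2 _ _ (by omega : (2*m+1 : ℕ) ≠ 2*n+1),
              lp.single_apply_ne 2 _ _ (by omega : (2*m+1 : ℕ) ≠ 2*n+2),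
              lp.single_apply_ne 2 _ _ (by omega : (2*m+2 : ℕ) ≠ 2*n+1),
              lp.single_apply_ne 2 _ _ (by omega : (2*m+2 : ℕ) ≠ 2*n+2)]
            ring
        have := h _ hy
        rw [hy_def, inner_sub_right, lp.inner_single_right, lp.inner_single_right] at this
        simp only [RCLike.inner_apply, starRingEnd_apply, star_trivial, mul_one] at this
        linarith
    · rintro ⟨hx0, hpair⟩ y hy
      rw [lp.inner_eq_tsum]
      have hsum : Summable fun i => ⟪x i, y i⟫ := lp.summable_inner x y
      set f : ℕ → ℝ := fun i => ⟪x i, y i⟫ with hf_def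
      have hfmul : ∀ i, f i = x i * y i := by
        intro i; simp [hf_def, RCLike.inner_apply]; ring
      have hneg : ∀ i, f (swapIdx i) = -f i := by
        intro i
        rcases tri i with rfl | ⟨n, rfl⟩ | ⟨n, rfl⟩
        · show f 0 = -f 0
          rw [hfmul, hx0]; ring
        · rw [swapIdx_odd, hfmul, hfmul, ← hpair n]
          have : y (2 * n + 2) = -(y (2 * n + 1)) := by linarith [hy n]
          rw [this]; ring
        · rw [swapIdx_even, hfmul, hfmul, hpair n]
          have : y (2 * n + 1) = -(y (2 * n + 2)) := by linarith [hy n]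
          rw [this]; ring
      have h1 : ∑' i, f (swapEquiv i) = ∑' i, f i := swapEquiv.tsum_eq f
      have h2 : ∑' i, f (swapEquiv i) = -∑' i, f i := by
        have : (fun i => f (swapEquiv i)) = fun i => -f i := by
          funext i; exact hneg i
        rw [this, tsum_neg]
      show ∑' i, f i = 0
      linarith
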